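/- arXiv:2601.09183 — 2 statements merged into one kernel-verified Lean document; each statement's English description precedes it below -/
import Mathlib

section
/- Let y : [0,∞) → [0,∞) be differentiable and let z, α, β : [0,∞) → [0,∞) be continuous. If y′(t) + z(t) ≤ α(t) y(t) + β(t) for all t > 0, then for all t ≥ 0, y(t) + ∫₀ᵗ z(s) ds ≤ (y(0) + ∫₀ᵗ β(s) ds) · (1 + (∫₀ᵗ α(s) ds) · exp(∫₀ᵗ α(s) ds)). -/
open MeasureTheory Set

private lemma gw_intInt {f : ℝ → ℝ} (hf : ContinuousOn f (Ici 0)) {a b : ℝ}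
    (ha : 0 ≤ a) (hb : 0 ≤ b) : IntervalIntegrable f volume a b :=
  (hf.mono (fun x hx => le_trans (le_min ha hb) hx.1)).intervalIntegrable

private lemma gw_prim_deriv {f : ℝ → ℝ} (hf : ContinuousOn f (Ici 0)) {t : ℝ} (ht : 0 < t) :
    HasDerivAt (fun u => ∫ s in (0:ℝ)..u, f s) (f t) t :=
  intervalIntegral.integral_hasDerivAt_right (gw_intInt hf le_rfl ht.le)
    ((hf.mono Ioi_subset_Ici_self).stronglyMeasurableAtFilter isOpen_Ioi t ht)
    (hf.continuousAt (Ici_mem_nhds ht))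

private lemma gw_prim_cont {f : ℝ → ℝ} (hf : ContinuousOn f (Ici 0)) {T : ℝ} (hT : 0 ≤ T) :
    ContinuousOn (fun u => ∫ s in (0:ℝ)..u, f s) (Icc 0 T) := by
  have h := intervalIntegral.continuousOn_primitive_interval
    (μ := volume) (a := (0:ℝ)) (b := T) (f := f) ?_
  · rwa [uIcc_of_le hT] at h
  · rw [uIcc_of_le hT]
    exact (hf.mono Icc_subset_Ici_self).integrableOn_Icc

private lemma gw_prim_nonneg {f : ℝ → ℝ} (hfnn : ∀ t ∈ Ici (0:ℝ), 0 ≤ f t)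
    {t : ℝ} (ht : 0 ≤ t) : 0 ≤ ∫ s in (0:ℝ)..t, f s :=
  intervalIntegral.integral_nonneg ht (fun u hu => hfnn u hu.1)

private lemma gw_prim_mono {f : ℝ → ℝ} (hf : ContinuousOn f (Ici 0))
    (hfnn : ∀ t ∈ Ici (0:ℝ), 0 ≤ f t) {s t : ℝ} (hs : 0 ≤ s) (hst : s ≤ t) :
    (∫ u in (0:ℝ)..s, f u) ≤ ∫ u in (0:ℝ)..t, f u := by
  have h1 := intervalIntegral.integral_add_adjacent_intervals
    (gw_intInt hf le_rfl hs) (gw_intInt hf hs (hs.trans hst))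
  have h2 : 0 ≤ ∫ u in s..t, f u :=
    intervalIntegral.integral_nonneg hst (fun u hu => hfnn u (hs.trans hu.1))
  linarith

/-- The Gronwall inequality, second form. -/
theorem gronwall_second (y z α β : ℝ → ℝ)
    (hy : DifferentiableOn ℝ y (Ici (0 : ℝ)))
    (hynn : ∀ t ∈ Ici (0 : ℝ), 0 ≤ y t)
    (hzc : ContinuousOn z (Ici (0 : ℝ))) (hznn : ∀ t ∈ Ici (0 : ℝ), 0 ≤ z t)
    (hac : ContinuousOn α (Ici (0 : ℝ))) (hann : ∀ t ∈ Ici (0 : ℝ), 0 ≤ α t)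
    (hbc : ContinuousOn β (Ici (0 : ℝ))) (hbnn : ∀ t ∈ Ici (0 : ℝ), 0 ≤ β t)
    (hineq : ∀ t : ℝ, 0 < t → deriv y t + z t ≤ α t * y t + β t) :
    ∀ t : ℝ, 0 ≤ t →
      y t + (∫ s in (0 : ℝ)..t, z s)
        ≤ (y 0 + ∫ s in (0 : ℝ)..t, β s)
            * (1 + (∫ s in (0 : ℝ)..t, α s) * Real.exp (∫ s in (0 : ℝ)..t, α s)) := by
  intro T hT
  have hyc : ContinuousOn y (Ici (0:ℝ)) := hy.continuousOn
  have hyd : ∀ t : ℝ, 0 < t → HasDerivAt y (deriv y t) t := fun t ht =>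
    ((hy t ht.le).differentiableAt (Ici_mem_nhds ht)).hasDerivAt
  -- Step 1: the antitone function u(t) = y(t) * exp(-A(t)) - B(t)
  set u : ℝ → ℝ := fun t => y t * Real.exp (-(∫ s in (0:ℝ)..t, α s)) - ∫ s in (0:ℝ)..t, β s
    with hu_def
  have hu_deriv : ∀ t ∈ Ioo (0:ℝ) T, HasDerivAt u
      (deriv y t * Real.exp (-(∫ s in (0:ℝ)..t, α s))
        + y t * (Real.exp (-(∫ s in (0:ℝ)..t, α s)) * -(α t)) - β t) t := by
    intro t ht
    exact ((hyd t ht.1).mul ((gw_prim_deriv hac ht.1).neg.exp)).sub (gw_prim_deriv hbc ht.1)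
  have hu_anti : AntitoneOn u (Icc 0 T) := by
    refine antitoneOn_of_deriv_nonpos (convex_Icc 0 T) ?_ ?_ ?_
    · exact ((hyc.mono Icc_subset_Ici_self).mul (ContinuousOn.rexp (f := fun t => -(∫ s in (0:ℝ)..t, α s)) (gw_prim_cont hac hT).neg)).sub
        (gw_prim_cont hbc hT)
    · rw [interior_Icc]
      exact fun t ht => ((hu_deriv t ht).differentiableAt).differentiableWithinAt
    · rw [interior_Icc]
      intro t ht
      rw [(hu_deriv t ht).deriv]
      have hE0 : (0:ℝ) < Real.exp (-(∫ s in (0:ℝ)..t, α s)) := Real.exp_pos _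
      have hE1 : Real.exp (-(∫ s in (0:ℝ)..t, α s)) ≤ 1 := by
        rw [Real.exp_le_one_iff]
        simpa using gw_prim_nonneg hann ht.1.le
      have h1 : deriv y t - α t * y t ≤ β t - z t := by linarith [hineq t ht.1]
      have h2 := mul_le_mul_of_nonneg_right h1 hE0.le
      have hb := hbnn t ht.1.le
      have hz := hznn t ht.1.le
      nlinarith
  have hstep1 : ∀ s ∈ Icc (0:ℝ) T,
      y s ≤ (y 0 + ∫ u in (0:ℝ)..s, β u) * Real.exp (∫ u in (0:ℝ)..s, α u) := by
    intro s hs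
    have h := hu_anti (left_mem_Icc.2 hT) hs hs.1
    simp only [hu_def, intervalIntegral.integral_same, neg_zero, Real.exp_zero, mul_one,
      sub_zero] at h
    have key : y s * (Real.exp (∫ u in (0:ℝ)..s, α u))⁻¹ ≤ y 0 + ∫ u in (0:ℝ)..s, β u := by
      rw [← Real.exp_neg]; linarith
    have hE := Real.exp_pos (∫ u in (0:ℝ)..s, α u)
    calc y s = y s * (Real.exp (∫ u in (0:ℝ)..s, α u))⁻¹ * Real.exp (∫ u in (0:ℝ)..s, α u) := by
          field_simp
      _ ≤ (y 0 + ∫ u in (0:ℝ)..s, β u) * Real.exp (∫ u in (0:ℝ)..s, α u) :=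
          mul_le_mul_of_nonneg_right key hE.le
  -- Step 2: the antitone function v(t) = y(t) + Z(t) - B(t) - ∫₀ᵗ α y
  have hαy : ContinuousOn (fun s => α s * y s) (Ici (0:ℝ)) := hac.mul hyc
  set v : ℝ → ℝ := fun t => y t + (∫ s in (0:ℝ)..t, z s) - (∫ s in (0:ℝ)..t, β s)
      - ∫ s in (0:ℝ)..t, α s * y s with hv_def
  have hv_anti : AntitoneOn v (Icc 0 T) := by
    refine antitoneOn_of_deriv_nonpos (convex_Icc 0 T) ?_ ?_ ?_
    · exact (((hyc.mono Icc_subset_Ici_self).add (gw_prim_cont hzc hT)).sub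
        (gw_prim_cont hbc hT)).sub (gw_prim_cont hαy hT)
    · rw [interior_Icc]
      intro t ht
      exact ((((hyd t ht.1).add (gw_prim_deriv hzc ht.1)).sub (gw_prim_deriv hbc ht.1)).sub
        (gw_prim_deriv hαy ht.1)).differentiableAt.differentiableWithinAt
    · rw [interior_Icc]
      intro t ht
      rw [show deriv v t = _ from ((((hyd t ht.1).add (gw_prim_deriv hzc ht.1)).sub (gw_prim_deriv hbc ht.1)).sub
        (gw_prim_deriv hαy ht.1)).deriv]
      linarith [hineq t ht.1]
  have hstep2 : y T + (∫ s in (0:ℝ)..T, z s) ≤ y 0 + (∫ s in (0:ℝ)..T, β s)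
      + ∫ s in (0:ℝ)..T, α s * y s := by
    have h := hv_anti (left_mem_Icc.2 hT) (right_mem_Icc.2 hT) hT
    simp only [hv_def, intervalIntegral.integral_same, sub_zero, add_zero] at h
    linarith
  -- Step 3: bound ∫₀ᵀ α y
  have hBT : (0:ℝ) ≤ ∫ s in (0:ℝ)..T, β s := gw_prim_nonneg hbnn hT
  have hAT : (0:ℝ) ≤ ∫ s in (0:ℝ)..T, α s := gw_prim_nonneg hann hT
  have hy0 : (0:ℝ) ≤ y 0 := hynn 0 Set.self_mem_Ici
  have hstep3 : (∫ s in (0:ℝ)..T, α s * y s)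
      ≤ (∫ s in (0:ℝ)..T, α s) * ((y 0 + ∫ s in (0:ℝ)..T, β s)
          * Real.exp (∫ s in (0:ℝ)..T, α s)) := by
    rw [← intervalIntegral.integral_mul_const]
    refine intervalIntegral.integral_mono_on hT (gw_intInt hαy le_rfl hT)
      ((gw_intInt hac le_rfl hT).mul_const _) ?_
    intro s hs
    have h1 : y s ≤ (y 0 + ∫ u in (0:ℝ)..s, β u) * Real.exp (∫ u in (0:ℝ)..s, α u) :=
      hstep1 s hs
    have h2 : (∫ u in (0:ℝ)..s, β u) ≤ ∫ u in (0:ℝ)..T, β u :=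
      gw_prim_mono hbc hbnn hs.1 hs.2
    have h3 : Real.exp (∫ u in (0:ℝ)..s, α u) ≤ Real.exp (∫ u in (0:ℝ)..T, α u) :=
      Real.exp_le_exp.2 (gw_prim_mono hac hann hs.1 hs.2)
    have h4 : (0:ℝ) ≤ y 0 + ∫ u in (0:ℝ)..s, β u :=
      add_nonneg hy0 (gw_prim_nonneg hbnn hs.1)
    have h5 : y s ≤ (y 0 + ∫ u in (0:ℝ)..T, β u) * Real.exp (∫ u in (0:ℝ)..T, α u) :=
      h1.trans (mul_le_mul (by linarith) h3 (Real.exp_pos _).le (by linarith))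
    exact mul_le_mul_of_nonneg_left h5 (hann s hs.1)
  nlinarith [Real.exp_pos (∫ s in (0:ℝ)..T, α s)]
end

section
/- Let h > 0, G = (0,1)², Ω = G × (−h,0), and let v : closure(Ω) → ℝ² be continuously differentiable. Set v̄(x,y) = (1/h)∫_{−h}^0 v(x,y,z) dz and ṽ = v − v̄. Then for every q ∈ [1,∞), ‖ṽ‖_{L^q(Ω)} ≤ h ‖∂_z v‖_{L^q(Ω)}. -/
open MeasureTheory Set

noncomputable section

/-- Points of 3D space, with coordinates `(x, y, z)`. -/
abbrev Pt : Type := ℝ × ℝ × ℝ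

/-- Values of the horizontal velocity: `ℝ²` with the Euclidean norm. -/
abbrev V2 : Type := EuclideanSpace ℝ (Fin 2)

section Derivs

variable {E : Type*} [NormedAddCommGroup E] [NormedSpace ℝ E]

/-- Partial derivative in the `x` direction. -/
def pdX (f : Pt → E) (p : Pt) : E := deriv (fun s => f (s, p.2.1, p.2.2)) p.1

/-- Partial derivative in the `y` direction. -/
def pdY (f : Pt → E) (p : Pt) : E := deriv (fun s => f (p.1, s, p.2.2)) p.2.1

/-- Partial derivative in the `z` direction. -/
def pdZ (f : Pt → E) (p : Pt) : E := deriv (fun s => f (p.1, p.2.1, s)) p.2.2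

/-- The `i`-th partial derivative, `i : Fin 3`. -/
def pD (i : Fin 3) (f : Pt → E) (p : Pt) : E :=
  if i = 0 then pdX f p else if i = 1 then pdY f p else pdZ f p

/-- `|∇f|²`, the squared Euclidean norm of the full spatial gradient array. -/
def gradSq (f : Pt → E) (p : Pt) : ℝ :=
  ‖pdX f p‖ ^ 2 + ‖pdY f p‖ ^ 2 + ‖pdZ f p‖ ^ 2

/-- `|∇_H f|²`, the squared Euclidean norm of the horizontal gradient array. -/
def gradHSq (f : Pt → E) (p : Pt) : ℝ := ‖pdX f p‖ ^ 2 + ‖pdY f p‖ ^ 2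

/-- `|∇²f|²`, the squared Euclidean norm of the array of all second spatial derivatives. -/
def hessSq (f : Pt → E) (p : Pt) : ℝ :=
  ∑ i : Fin 3, ∑ j : Fin 3, ‖pD i (pD j f) p‖ ^ 2

/-- `|∇∇_H f|²`: second derivatives involving at least one horizontal derivative. -/
def hessHSq (f : Pt → E) (p : Pt) : ℝ :=
  ∑ i : Fin 3, (‖pD i (pdX f) p‖ ^ 2 + ‖pD i (pdY f) p‖ ^ 2)

/-- The spatial Laplacian. -/
def lap (f : Pt → E) (p : Pt) : E := pdX (pdX f) p + pdY (pdY f) p + pdZ (pdZ f) p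

end Derivs

/-- The horizontal square `G = (0,1)²`. -/
def GSq : Set (ℝ × ℝ) := Ioo (0 : ℝ) 1 ×ˢ Ioo (0 : ℝ) 1

/-- The domain `Ω = G × (−h, 0)`. -/
def Omega3 (h : ℝ) : Set Pt := Ioo (0 : ℝ) 1 ×ˢ (Ioo (0 : ℝ) 1 ×ˢ Ioo (-h) 0)

section Norms

variable {E : Type*} [NormedAddCommGroup E] [NormedSpace ℝ E]

/-- `‖f‖_{L^q(Ω)}^q = ∫_Ω |f|^q`. -/
def LqPow (h q : ℝ) (f : Pt → E) : ℝ := ∫ p in Omega3 h, ‖f p‖ ^ q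

/-- `‖f‖_{L^q(Ω)}`. -/
def LqNorm (h q : ℝ) (f : Pt → E) : ℝ := (LqPow h q f) ^ (1 / q)

/-- `‖f‖_{L²(Ω)}²`. -/
def L2sq (h : ℝ) (f : Pt → E) : ℝ := ∫ p in Omega3 h, ‖f p‖ ^ 2

/-- `‖∇f‖_{L²(Ω)}²`. -/
def gradL2sq (h : ℝ) (f : Pt → E) : ℝ := ∫ p in Omega3 h, gradSq f p

/-- `‖f‖_{H¹(Ω)}² = ‖f‖_{L²(Ω)}² + ‖∇f‖_{L²(Ω)}²`. -/
def H1sq (h : ℝ) (f : Pt → E) : ℝ := L2sq h f + gradL2sq h f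

/-- `‖∇²f‖_{L²(Ω)}²`. -/
def hessL2sq (h : ℝ) (f : Pt → E) : ℝ := ∫ p in Omega3 h, hessSq f p

/-- `‖∇_H f‖_{L²(Ω)}²`. -/
def gradHL2sq (h : ℝ) (f : Pt → E) : ℝ := ∫ p in Omega3 h, gradHSq f p

/-- `‖∇∇_H f‖_{L²(Ω)}²`. -/
def hessHL2sq (h : ℝ) (f : Pt → E) : ℝ := ∫ p in Omega3 h, hessHSq f p

end Norms

/-- Horizontal divergence of a horizontal vector field on `Ω`. -/
def divH (f : Pt → V2) (p : Pt) : ℝ := pdX f p 0 + pdY f p 1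

/-- Vertical average `f̄(x,y) = (1/h) ∫_{−h}^0 f(x,y,z) dz`. -/
def vertAvg (h : ℝ) (f : Pt → V2) (q : ℝ × ℝ) : V2 :=
  (1 / h) • ∫ z in (-h)..(0 : ℝ), f (q.1, q.2, z)

/-- Deviation from the vertical average, `f̃ = f − f̄`. -/
def tildeDev (h : ℝ) (f : Pt → V2) (p : Pt) : V2 := f p - vertAvg h f (p.1, p.2.1)

/-- Horizontal divergence of a vector field on `G`. -/
def divH2 (f : (ℝ × ℝ) → V2) (q : ℝ × ℝ) : ℝ :=
  deriv (fun s => f (s, q.2) 0) q.1 + deriv (fun s => f (q.1, s) 1) q.2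

/-- Horizontal gradient of a scalar function on `G`, as a vector in `ℝ²`. -/
def gradH2 (g : (ℝ × ℝ) → ℝ) (q : ℝ × ℝ) : V2 :=
  (WithLp.equiv 2 (Fin 2 → ℝ)).symm
    ![deriv (fun s => g (s, q.2)) q.1, deriv (fun s => g (q.1, s)) q.2]

/-- The vertical velocity `w(x,y,z,t) = −∫_{−h}^z div_H v(x,y,ζ,t) dζ`. -/
def wvel (h : ℝ) (v : Pt → ℝ → V2) (p : Pt) (t : ℝ) : ℝ :=
  -∫ ζ in (-h)..p.2.2, divH (fun q => v q t) (p.1, p.2.1, ζ)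

/-- The convection term `(v·∇_H)v + w ∂_z v`. -/
def convTerm (h : ℝ) (v : Pt → ℝ → V2) (p : Pt) (t : ℝ) : V2 :=
  v p t 0 • pdX (fun q => v q t) p + v p t 1 • pdY (fun q => v q t) p
    + wvel h v p t • pdZ (fun q => v q t) p

/-- The common part of a smooth solution of the primitive equations on `Ω × [0,T]`,
with initial datum `a` and pressure `pr`: regularity (`C²` in space, `C¹` in time,
smooth up to the boundary, via globally defined extensions that are `1`-periodic
horizontally), zero mean of the pressure, the momentum equation, the divergence-free
condition for the vertical average, horizontal periodicity, and the initial condition. -/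
structure PECore (h T : ℝ) (v : Pt → ℝ → V2) (pr : (ℝ × ℝ) → ℝ → ℝ)
    (a : Pt → V2) : Prop where
  smooth_space : ∀ t ∈ Icc (0 : ℝ) T, ContDiff ℝ 2 (fun p => v p t)
  smooth_time : ∀ p : Pt, ContDiffOn ℝ 1 (v p) (Icc (0 : ℝ) T)
  cont_joint : Continuous (Function.uncurry v)
  smooth_pr : ∀ t ∈ Icc (0 : ℝ) T, ContDiff ℝ 2 (fun q => pr q t)
  pr_mean : ∀ t ∈ Icc (0 : ℝ) T, (∫ q in GSq, pr q t) = 0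
  momentum : ∀ p ∈ Omega3 h, ∀ t ∈ Ioo (0 : ℝ) T,
    deriv (v p) t + convTerm h v p t - lap (fun q => v q t) p
      + gradH2 (fun q => pr q t) (p.1, p.2.1) = 0
  div_vbar : ∀ q ∈ GSq, ∀ t ∈ Ioo (0 : ℝ) T,
    divH2 (vertAvg h (fun p => v p t)) q = 0
  periodic_x : ∀ (p : Pt) (t : ℝ), v (p.1 + 1, p.2.1, p.2.2) t = v p t
  periodic_y : ∀ (p : Pt) (t : ℝ), v (p.1, p.2.1 + 1, p.2.2) t = v p t
  periodic_pr_x : ∀ (q : ℝ × ℝ) (t : ℝ), pr (q.1 + 1, q.2) t = pr q t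
  periodic_pr_y : ∀ (q : ℝ × ℝ) (t : ℝ), pr (q.1, q.2 + 1) t = pr q t
  initial : ∀ p ∈ Omega3 h, v p 0 = a p


section AuxPoincare

open MeasureTheory Set ENNReal

lemma holder_pow_bound {α : Type*} [MeasurableSpace α] {μ : Measure α} (hμ : μ Set.univ ≠ ⊤)
    {f : α → ℝ} {C : ℝ} (hm : AEStronglyMeasurable f μ) (h0 : 0 ≤ᵐ[μ] f)
    (hC : ∀ᵐ a ∂μ, f a ≤ C) {q : ℝ} (hq : 1 ≤ q) :
    (∫ a, f a ∂μ) ^ q ≤ (μ Set.univ).toReal ^ (q - 1) * ∫ a, f a ^ q ∂μ := by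
  have hq0 : (0:ℝ) ≤ q := le_trans zero_le_one hq
  rcases eq_or_lt_of_le hq with hq1 | hq1
  · subst hq1
    simp only [Real.rpow_one, sub_self, Real.rpow_zero, one_mul]
    exact le_rfl
  set F : α → ℝ≥0∞ := fun a => ENNReal.ofReal (f a) with hF
  have hFm : AEMeasurable F μ := ENNReal.measurable_ofReal.comp_aemeasurable hm.aemeasurable
  have conj : q.HolderConjugate (q / (q - 1)) := Real.HolderConjugate.conjExponent hq1
  have hqne : q ≠ 0 := by positivity
  have hold := ENNReal.lintegral_mul_le_Lp_mul_Lq μ conj hFm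
    (aemeasurable_const (b := (1:ℝ≥0∞)))
  simp only [Pi.mul_apply, mul_one, ENNReal.one_rpow, lintegral_const, one_mul] at hold
  set A := ∫⁻ a, F a ∂μ with hA
  set B := ∫⁻ a, F a ^ q ∂μ with hB
  have key : A ^ q ≤ μ Set.univ ^ (q - 1) * B := by
    calc A ^ q ≤ ((B ^ (1/q)) * (μ Set.univ) ^ (1/(q/(q-1)))) ^ q :=
          ENNReal.rpow_le_rpow hold hq0
    _ = B ^ ((1/q)*q) * (μ Set.univ) ^ ((1/(q/(q-1)))*q) := by
          rw [ENNReal.mul_rpow_of_nonneg _ _ hq0, ← ENNReal.rpow_mul, ← ENNReal.rpow_mul]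
    _ = μ Set.univ ^ (q - 1) * B := by
          rw [one_div_mul_cancel hqne, ENNReal.rpow_one]
          rw [show (1/(q/(q-1)))*q = q - 1 by field_simp]
          ring
  have hBtop : B ≠ ⊤ := by
    have hle : B ≤ ENNReal.ofReal C ^ q * μ Set.univ := by
      rw [hB, ← lintegral_const]
      refine lintegral_mono_ae ?_
      filter_upwards [hC] with a ha
      exact ENNReal.rpow_le_rpow (ENNReal.ofReal_le_ofReal ha) hq0
    exact ne_top_of_le_ne_top
      (ENNReal.mul_ne_top (ENNReal.rpow_ne_top_of_nonneg hq0 ENNReal.ofReal_ne_top) hμ) hle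
  have hint1 : ∫ a, f a ∂μ = A.toReal := integral_eq_lintegral_of_nonneg_ae h0 hm
  have hmq : AEStronglyMeasurable (fun a => f a ^ q) μ :=
    (Real.continuous_rpow_const hq0).comp_aestronglyMeasurable hm
  have hint2 : ∫ a, f a ^ q ∂μ = B.toReal := by
    rw [integral_eq_lintegral_of_nonneg_ae (h0.mono fun a ha => Real.rpow_nonneg ha q) hmq]
    congr 1
    refine lintegral_congr_ae (h0.mono fun a ha => ?_)
    exact (ENNReal.ofReal_rpow_of_nonneg ha hq0).symm
  rw [hint1, hint2, ENNReal.toReal_rpow, ENNReal.toReal_rpow, ← ENNReal.toReal_mul]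
  exact ENNReal.toReal_mono
    (ENNReal.mul_ne_top (ENNReal.rpow_ne_top_of_nonneg (by linarith) hμ) hBtop) key

lemma integrableOn_of_contOn_bdd {X E : Type*} [MeasurableSpace X] [TopologicalSpace X]
    [OpensMeasurableSpace X] [SecondCountableTopology X]
    [NormedAddCommGroup E] {μ : Measure X} {s : Set X} {f : X → E}
    (hs : MeasurableSet s) (hμ : μ s ≠ ⊤) (hc : ContinuousOn f s) {M : ℝ}
    (hb : ∀ x ∈ s, ‖f x‖ ≤ M) : IntegrableOn f s μ :=
  ⟨hc.aestronglyMeasurable hs,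
    HasFiniteIntegral.restrict_of_bounded (C := M) (lt_top_iff_ne_top.2 hμ)
      ((ae_restrict_iff' hs).2 (Filter.Eventually.of_forall hb))⟩

end AuxPoincare

/-- The Poincaré-type inequality `‖ṽ‖_{L^q(Ω)} ≤ h ‖∂_z v‖_{L^q(Ω)}`. -/
theorem poincare_tildeDev (h : ℝ) (hh : 0 < h) (v : Pt → V2)
    (hv : ContDiffOn ℝ 1 v (closure (Omega3 h))) (q : ℝ) (hq : 1 ≤ q) :
    LqNorm h q (tildeDev h v) ≤ h * LqNorm h q (pdZ v) := by
  have hq0 : (0:ℝ) ≤ q := le_trans zero_le_one hq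
  have hqne : q ≠ 0 := by positivity
  have hh' : (-h : ℝ) ≤ 0 := by linarith
  have hΩeq : Omega3 h = Ioo (0:ℝ) 1 ×ˢ (Ioo (0:ℝ) 1 ×ˢ Ioo (-h) 0) := rfl
  have hΩo : IsOpen (Omega3 h) :=
    isOpen_Ioo.prod (isOpen_Ioo.prod isOpen_Ioo)
  have hΩm : MeasurableSet (Omega3 h) := hΩo.measurableSet
  have hKeq : closure (Omega3 h) = Icc (0:ℝ) 1 ×ˢ (Icc (0:ℝ) 1 ×ˢ Icc (-h) 0) := by
    rw [hΩeq, closure_prod_eq, closure_prod_eq, closure_Ioo (zero_ne_one),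
      closure_Ioo (by linarith : (-h:ℝ) ≠ 0)]
  have hOsub : Omega3 h ⊆ closure (Omega3 h) := subset_closure
  have hnhds : ∀ p ∈ Omega3 h, closure (Omega3 h) ∈ nhds p := fun p hp =>
    Filter.mem_of_superset (hΩo.mem_nhds hp) hOsub
  have hKcomp : IsCompact (closure (Omega3 h)) := by
    rw [hKeq]; exact isCompact_Icc.prod (isCompact_Icc.prod isCompact_Icc)
  have hKud : UniqueDiffOn ℝ (closure (Omega3 h)) := by
    rw [hKeq]
    exact (uniqueDiffOn_Icc one_pos).prod
      ((uniqueDiffOn_Icc one_pos).prod (uniqueDiffOn_Icc (by linarith)))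
  have hvcont : ContinuousOn v (closure (Omega3 h)) := hv.continuousOn
  have hmem : ∀ p : Pt, p ∈ Omega3 h ↔
      (p.1 ∈ Ioo (0:ℝ) 1 ∧ p.2.1 ∈ Ioo (0:ℝ) 1 ∧ p.2.2 ∈ Ioo (-h) 0) := by
    intro p; rw [hΩeq]; simp [Set.mem_prod, and_assoc]
  have hmemK : ∀ p : Pt, p.1 ∈ Icc (0:ℝ) 1 → p.2.1 ∈ Icc (0:ℝ) 1 → p.2.2 ∈ Icc (-h) 0 →
      p ∈ closure (Omega3 h) := by
    intro p h1 h2 h3; rw [hKeq]; exact ⟨h1, h2, h3⟩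
  have hdiff : ∀ p ∈ Omega3 h, DifferentiableAt ℝ v p := fun p hp =>
    ((hv.differentiableOn one_ne_zero) p (hOsub hp)).differentiableAt (hnhds p hp)
  have hFWcont : ContinuousOn (fderivWithin ℝ v (closure (Omega3 h))) (closure (Omega3 h)) :=
    hv.continuousOn_fderivWithin hKud le_rfl
  have hFcont : ContinuousOn (fun p => fderiv ℝ v p) (Omega3 h) := by
    refine (hFWcont.mono hOsub).congr fun p hp => ?_
    exact (fderivWithin_of_mem_nhds (hnhds p hp)).symm
  obtain ⟨C₀, hC₀⟩ := hKcomp.exists_bound_of_continuousOn hFWcont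
  set C : ℝ := max C₀ 0 with hCdef
  have hC0 : (0:ℝ) ≤ C := le_max_right _ _
  have hFb : ∀ p ∈ Omega3 h, ‖fderiv ℝ v p‖ ≤ C := by
    intro p hp
    rw [← fderivWithin_of_mem_nhds (hnhds p hp)]
    exact (hC₀ p (hOsub hp)).trans (le_max_left _ _)
  have he3 : ‖(((0:ℝ),(0:ℝ),(1:ℝ)) : Pt)‖ = 1 := by
    simp [Prod.norm_def]
  have hderivZ : ∀ p ∈ Omega3 h,
      HasDerivAt (fun s => v (p.1, p.2.1, s)) (fderiv ℝ v p ((0:ℝ),(0:ℝ),(1:ℝ))) p.2.2 := by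
    intro p hp
    have hline : HasDerivAt (fun s : ℝ => ((p.1, p.2.1, s) : Pt)) ((0:ℝ),(0:ℝ),(1:ℝ)) p.2.2 :=
      (hasDerivAt_const _ _).prodMk ((hasDerivAt_const _ _).prodMk (hasDerivAt_id _))
    exact (hdiff p hp).hasFDerivAt.comp_hasDerivAt p.2.2 hline
  have hpdZ : ∀ p ∈ Omega3 h, pdZ v p = fderiv ℝ v p ((0:ℝ),(0:ℝ),(1:ℝ)) := fun p hp =>
    (hderivZ p hp).deriv
  have hpdZb : ∀ p ∈ Omega3 h, ‖pdZ v p‖ ≤ C := by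
    intro p hp
    rw [hpdZ p hp]
    calc ‖fderiv ℝ v p ((0:ℝ),(0:ℝ),(1:ℝ))‖ ≤ ‖fderiv ℝ v p‖ * ‖(((0:ℝ),(0:ℝ),(1:ℝ)) : Pt)‖ :=
          (fderiv ℝ v p).le_opNorm _
    _ ≤ C := by rw [he3, mul_one]; exact hFb p hp
  have hpdZcont : ContinuousOn (pdZ v) (Omega3 h) := by
    have h1 : ContinuousOn (fun p => fderiv ℝ v p ((0:ℝ),(0:ℝ),(1:ℝ))) (Omega3 h) :=
      (ContinuousLinearMap.apply ℝ V2 (((0:ℝ),(0:ℝ),(1:ℝ)) : Pt)).continuous.comp_continuousOn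
        hFcont
    exact h1.congr hpdZ
  -- measure facts
  have hJm : MeasurableSet (Ioo (-h) (0:ℝ)) := measurableSet_Ioo
  have hμJ : volume (Ioo (-h) (0:ℝ)) ≠ ⊤ := by
    rw [Real.volume_Ioo]; exact ENNReal.ofReal_ne_top
  have hvolJ : (volume (Ioo (-h) (0:ℝ))).toReal = h := by
    rw [Real.volume_Ioo, ENNReal.toReal_ofReal (by linarith)]
    ring
  have hvol2 : (volume : Measure (ℝ × ℝ)) = (volume : Measure ℝ).prod volume :=
    MeasureTheory.Measure.volume_eq_prod _ _
  have hvol3 : (volume : Measure Pt) = (volume : Measure ℝ).prod (volume : Measure (ℝ × ℝ)) :=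
    MeasureTheory.Measure.volume_eq_prod _ _
  have hμIJ : volume (Ioo (0:ℝ) 1 ×ˢ Ioo (-h) 0) ≠ ⊤ := by
    rw [hvol2, Measure.prod_prod, Real.volume_Ioo, Real.volume_Ioo]
    exact ENNReal.mul_ne_top ENNReal.ofReal_ne_top ENNReal.ofReal_ne_top
  have hμΩ : volume (Omega3 h) ≠ ⊤ := by
    rw [hΩeq, hvol3, Measure.prod_prod, Real.volume_Ioo]
    exact ENNReal.mul_ne_top ENNReal.ofReal_ne_top hμIJ
  have hΩm2 : MeasurableSet (Ioo (0:ℝ) 1 ×ˢ Ioo (-h) 0) :=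
    measurableSet_Ioo.prod measurableSet_Ioo
  -- continuity of slices of pdZ
  have hline_cont : ∀ x y : ℝ, Continuous (fun z : ℝ => ((x, y, z) : Pt)) := fun x y =>
    continuous_const.prodMk (continuous_const.prodMk continuous_id)
  have hψcont : ∀ x ∈ Ioo (0:ℝ) 1, ∀ y ∈ Ioo (0:ℝ) 1,
      ContinuousOn (fun z => ‖pdZ v (x, y, z)‖) (Ioo (-h) 0) := by
    intro x hx y hy
    refine (hpdZcont.comp (hline_cont x y).continuousOn fun z hz => ?_).norm
    exact (hmem _).mpr ⟨hx, hy, hz⟩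
  have hψint : ∀ x ∈ Ioo (0:ℝ) 1, ∀ y ∈ Ioo (0:ℝ) 1,
      IntegrableOn (fun z => ‖pdZ v (x, y, z)‖) (Ioo (-h) 0) := by
    intro x hx y hy
    refine integrableOn_of_contOn_bdd hJm hμJ (hψcont x hx y hy) (M := C) ?_
    intro z hz
    rw [norm_norm]
    exact hpdZb _ ((hmem _).mpr ⟨hx, hy, hz⟩)
  have hDb : ∀ x ∈ Ioo (0:ℝ) 1, ∀ y ∈ Ioo (0:ℝ) 1,
      (∫ s in Ioo (-h) 0, ‖pdZ v (x, y, s)‖) ≤ h * C := by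
    intro x hx y hy
    calc (∫ s in Ioo (-h) 0, ‖pdZ v (x, y, s)‖) ≤ ∫ _s in Ioo (-h) 0, C := by
          refine setIntegral_mono_on (hψint x hx y hy)
            (integrableOn_const hμJ) hJm ?_
          intro s hs
          exact hpdZb _ ((hmem _).mpr ⟨hx, hy, hs⟩)
    _ = h * C := by rw [setIntegral_const, measureReal_def, hvolJ, smul_eq_mul]
  -- Step A : pointwise bound by the z-integral of ‖pdZ v‖
  have stepA : ∀ p ∈ Omega3 h,
      ‖tildeDev h v p‖ ≤ ∫ s in Ioo (-h) 0, ‖pdZ v (p.1, p.2.1, s)‖ := by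
    intro p hp
    obtain ⟨hx, hy, hz⟩ := (hmem p).mp hp
    set D : ℝ := ∫ s in Ioo (-h) 0, ‖pdZ v (p.1, p.2.1, s)‖ with hD
    have hψi := hψint p.1 hx p.2.1 hy
    -- the v-slice is continuous on [-h,0]
    have hvslice : ContinuousOn (fun z => v (p.1, p.2.1, z)) (Icc (-h) 0) := by
      refine hvcont.comp (hline_cont p.1 p.2.1).continuousOn fun z hz' => ?_
      exact hmemK _ ⟨hx.1.le, hx.2.le⟩ ⟨hy.1.le, hy.2.le⟩ hz'
    have hIIv : IntervalIntegrable (fun z => v (p.1, p.2.1, z)) volume (-h) 0 :=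
      ContinuousOn.intervalIntegrable (by rwa [uIcc_of_le hh'])
    have heq : tildeDev h v p = (1/h) • ∫ ζ in (-h)..(0:ℝ), (v p - v (p.1, p.2.1, ζ)) := by
      rw [tildeDev, vertAvg]
      rw [intervalIntegral.integral_sub (intervalIntegrable_const) hIIv]
      rw [intervalIntegral.integral_const, smul_sub, smul_smul]
      have : (1/h) * (0 - (-h)) = 1 := by field_simp; ring
      rw [this, one_smul]
    -- pointwise FTC bound
    have hptws : ∀ ζ ∈ Ioo (-h) (0:ℝ), ‖v p - v (p.1, p.2.1, ζ)‖ ≤ D := by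
      intro ζ hζ
      have huIcc : uIcc ζ p.2.2 ⊆ Ioo (-h) 0 := Set.ordConnected_Ioo.uIcc_subset hζ hz
      have hder : ∀ s ∈ uIcc ζ p.2.2,
          HasDerivAt (fun t => v (p.1, p.2.1, t)) (pdZ v (p.1, p.2.1, s)) s := by
        intro s hs
        have hsΩ : ((p.1, p.2.1, s) : Pt) ∈ Omega3 h := (hmem _).mpr ⟨hx, hy, huIcc hs⟩
        rw [hpdZ _ hsΩ]
        exact hderivZ _ hsΩ
      have hII : IntervalIntegrable (fun s => pdZ v (p.1, p.2.1, s)) volume ζ p.2.2 := by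
        refine ContinuousOn.intervalIntegrable ?_
        refine (hpdZcont.comp (hline_cont p.1 p.2.1).continuousOn fun s hs => ?_)
        exact (hmem _).mpr ⟨hx, hy, huIcc hs⟩
      have hftc : ∫ s in ζ..p.2.2, pdZ v (p.1, p.2.1, s) = v (p.1, p.2.1, p.2.2) - v (p.1, p.2.1, ζ) :=
        intervalIntegral.integral_eq_sub_of_hasDerivAt hder hII
      have hvp : v p = v (p.1, p.2.1, p.2.2) := rfl
      rw [hvp, ← hftc]
      refine le_trans (intervalIntegral.norm_integral_le_abs_integral_norm) ?_
      rcases le_total ζ p.2.2 with hle | hle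
      · rw [abs_of_nonneg (intervalIntegral.integral_nonneg hle fun s _ => norm_nonneg _)]
        rw [intervalIntegral.integral_of_le hle, MeasureTheory.integral_Ioc_eq_integral_Ioo]
        refine setIntegral_mono_set hψi (Filter.Eventually.of_forall fun s => norm_nonneg _) ?_
        refine HasSubset.Subset.eventuallyLE fun s hs => ?_
        exact ⟨lt_trans hζ.1 hs.1, lt_trans hs.2 hz.2⟩
      · rw [intervalIntegral.integral_symm, abs_neg,
          abs_of_nonneg (intervalIntegral.integral_nonneg hle fun s _ => norm_nonneg _)]
        rw [intervalIntegral.integral_of_le hle, MeasureTheory.integral_Ioc_eq_integral_Ioo]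
        refine setIntegral_mono_set hψi (Filter.Eventually.of_forall fun s => norm_nonneg _) ?_
        refine HasSubset.Subset.eventuallyLE fun s hs => ?_
        exact ⟨lt_trans hz.1 hs.1, lt_trans hs.2 hζ.2⟩
    -- combine
    rw [heq, norm_smul, Real.norm_of_nonneg (by positivity : (0:ℝ) ≤ 1/h)]
    have hb1 : ‖∫ ζ in (-h)..(0:ℝ), (v p - v (p.1, p.2.1, ζ))‖
        ≤ ∫ ζ in (-h)..(0:ℝ), ‖v p - v (p.1, p.2.1, ζ)‖ :=
      intervalIntegral.norm_integral_le_integral_norm hh'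
    have hb2 : ∫ ζ in (-h)..(0:ℝ), ‖v p - v (p.1, p.2.1, ζ)‖ ≤ h * D := by
      rw [intervalIntegral.integral_of_le hh', MeasureTheory.integral_Ioc_eq_integral_Ioo]
      have hidiff : IntegrableOn (fun ζ => ‖v p - v (p.1, p.2.1, ζ)‖) (Ioo (-h) 0) := by
        refine integrableOn_of_contOn_bdd hJm hμJ ?_ (M := h * C) ?_
        · refine ContinuousOn.norm ?_
          refine (continuousOn_const.sub (hvslice.mono Ioo_subset_Icc_self))
        · intro ζ hζ
          rw [norm_norm]
          exact le_trans (hptws ζ hζ) (hDb p.1 hx p.2.1 hy)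
      calc ∫ ζ in Ioo (-h) 0, ‖v p - v (p.1, p.2.1, ζ)‖ ≤ ∫ _ζ in Ioo (-h) (0:ℝ), D := by
            refine setIntegral_mono_on hidiff ?_ hJm hptws
            exact integrableOn_const hμJ
      _ = h * D := by rw [setIntegral_const, measureReal_def, hvolJ, smul_eq_mul]
    calc (1/h) * ‖∫ ζ in (-h)..(0:ℝ), (v p - v (p.1, p.2.1, ζ))‖ ≤ (1/h) * (h * D) := by
          refine mul_le_mul_of_nonneg_left (le_trans hb1 hb2) (by positivity)
    _ = D := by field_simp
  -- Step B : Hölder on the inner integral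
  set g : ℝ × ℝ → ℝ := fun xy => ∫ s in Ioo (-h) 0, ‖pdZ v (xy.1, xy.2, s)‖ ^ q with hgdef
  have hg0 : ∀ xy : ℝ × ℝ, 0 ≤ g xy := fun xy =>
    setIntegral_nonneg hJm fun s _ => Real.rpow_nonneg (norm_nonneg _) _
  have stepB : ∀ x ∈ Ioo (0:ℝ) 1, ∀ y ∈ Ioo (0:ℝ) 1,
      (∫ s in Ioo (-h) 0, ‖pdZ v (x, y, s)‖) ^ q ≤ h ^ (q-1) * g (x, y) := by
    intro x hx y hy
    have hres : (volume.restrict (Ioo (-h) (0:ℝ))) Set.univ ≠ ⊤ := by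
      rw [Measure.restrict_apply_univ]; exact hμJ
    have hmble : AEStronglyMeasurable (fun s => ‖pdZ v (x, y, s)‖)
        (volume.restrict (Ioo (-h) (0:ℝ))) :=
      (hψcont x hx y hy).aestronglyMeasurable hJm
    have h0 : 0 ≤ᵐ[volume.restrict (Ioo (-h) (0:ℝ))] (fun s => ‖pdZ v (x, y, s)‖) :=
      Filter.Eventually.of_forall fun s => norm_nonneg _
    have hCae : ∀ᵐ s ∂(volume.restrict (Ioo (-h) (0:ℝ))), ‖pdZ v (x, y, s)‖ ≤ C :=
      (ae_restrict_iff' hJm).2 (Filter.Eventually.of_forall fun s hs =>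
        hpdZb _ ((hmem _).mpr ⟨hx, hy, hs⟩))
    have hhold := holder_pow_bound hres hmble h0 hCae hq
    rw [Measure.restrict_apply_univ, hvolJ] at hhold
    exact hhold
  have keyPt : ∀ p ∈ Omega3 h, ‖tildeDev h v p‖ ^ q ≤ h ^ (q-1) * g (p.1, p.2.1) := by
    intro p hp
    obtain ⟨hx, hy, hz⟩ := (hmem p).mp hp
    exact le_trans (Real.rpow_le_rpow (norm_nonneg _) (stepA p hp) hq0) (stepB p.1 hx p.2.1 hy)
  -- continuity of the vertical average and of tildeDev
  obtain ⟨C₁, hC₁⟩ := hKcomp.exists_bound_of_continuousOn hvcont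
  have hGmem : ∀ x y : ℝ, x ∈ Ioo (0:ℝ) 1 → y ∈ Ioo (0:ℝ) 1 → ((x, y) : ℝ × ℝ) ∈ GSq :=
    fun x y hx hy => ⟨hx, hy⟩
  have hbar0 : ContinuousOn (fun xy : ℝ × ℝ => ∫ z in Ioo (-h) 0, v (xy.1, xy.2, z)) GSq := by
    refine continuousOn_of_dominated (bound := fun _ => C₁) ?_ ?_ ?_ ?_
    · intro xy hxy
      refine ContinuousOn.aestronglyMeasurable ?_ hJm
      refine hvcont.comp (hline_cont xy.1 xy.2).continuousOn fun z hz => ?_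
      exact hmemK _ (Ioo_subset_Icc_self hxy.1) (Ioo_subset_Icc_self hxy.2)
        (Ioo_subset_Icc_self hz)
    · intro xy hxy
      refine (ae_restrict_iff' hJm).2 (Filter.Eventually.of_forall fun z hz => ?_)
      exact hC₁ _ (hmemK _ (Ioo_subset_Icc_self hxy.1) (Ioo_subset_Icc_self hxy.2)
        (Ioo_subset_Icc_self hz))
    · exact integrableOn_const hμJ
    · refine (ae_restrict_iff' hJm).2 (Filter.Eventually.of_forall fun z hz => ?_)
      refine hvcont.comp
        (continuous_fst.prodMk (continuous_snd.prodMk continuous_const)).continuousOn ?_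
      intro xy hxy
      exact hmemK _ (Ioo_subset_Icc_self hxy.1) (Ioo_subset_Icc_self hxy.2)
        (Ioo_subset_Icc_self hz)
  have hbar : ContinuousOn (fun xy : ℝ × ℝ => vertAvg h v xy) GSq := by
    refine (hbar0.const_smul (1/h)).congr fun xy hxy => ?_
    rw [vertAvg, intervalIntegral.integral_of_le hh', MeasureTheory.integral_Ioc_eq_integral_Ioo]; rfl
  have htdcont : ContinuousOn (tildeDev h v) (Omega3 h) := by
    have h1 : ContinuousOn (fun p : Pt => vertAvg h v (p.1, p.2.1)) (Omega3 h) := by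
      refine hbar.comp
        (continuous_fst.prodMk (continuous_fst.comp continuous_snd)).continuousOn ?_
      intro p hp
      obtain ⟨hx, hy, _⟩ := (hmem p).mp hp
      exact ⟨hx, hy⟩
    exact (hvcont.mono hOsub).sub h1
  have htdb : ∀ p ∈ Omega3 h, ‖tildeDev h v p‖ ≤ h * C := by
    intro p hp
    obtain ⟨hx, hy, _⟩ := (hmem p).mp hp
    exact (stepA p hp).trans (hDb p.1 hx p.2.1 hy)
  -- continuity and bound for g
  have hgb : ∀ x ∈ Ioo (0:ℝ) 1, ∀ y ∈ Ioo (0:ℝ) 1, g (x, y) ≤ h * C ^ q := by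
    intro x hx y hy
    have hψqi : IntegrableOn (fun z => ‖pdZ v (x, y, z)‖ ^ q) (Ioo (-h) 0) := by
      refine integrableOn_of_contOn_bdd hJm hμJ
        ((hψcont x hx y hy).rpow_const fun z hz => Or.inr hq0) (M := C ^ q) ?_
      intro z hz
      rw [Real.norm_of_nonneg (Real.rpow_nonneg (norm_nonneg _) q)]
      exact Real.rpow_le_rpow (norm_nonneg _) (hpdZb _ ((hmem _).mpr ⟨hx, hy, hz⟩)) hq0
    calc g (x, y) ≤ ∫ _s in Ioo (-h) 0, C ^ q := by
          refine setIntegral_mono_on hψqi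
            (integrableOn_const hμJ) hJm ?_
          intro s hs
          exact Real.rpow_le_rpow (norm_nonneg _) (hpdZb _ ((hmem _).mpr ⟨hx, hy, hs⟩)) hq0
    _ = h * C ^ q := by rw [setIntegral_const, measureReal_def, hvolJ, smul_eq_mul]
  have hgcont : ContinuousOn g GSq := by
    refine continuousOn_of_dominated (bound := fun _ => C ^ q) ?_ ?_ ?_ ?_
    · intro xy hxy
      refine ContinuousOn.aestronglyMeasurable ?_ hJm
      exact (hψcont xy.1 hxy.1 xy.2 hxy.2).rpow_const fun z hz => Or.inr hq0
    · intro xy hxy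
      refine (ae_restrict_iff' hJm).2 (Filter.Eventually.of_forall fun z hz => ?_)
      rw [Real.norm_of_nonneg (Real.rpow_nonneg (norm_nonneg _) q)]
      exact Real.rpow_le_rpow (norm_nonneg _)
        (hpdZb _ ((hmem _).mpr ⟨hxy.1, hxy.2, hz⟩)) hq0
    · exact integrableOn_const hμJ
    · refine (ae_restrict_iff' hJm).2 (Filter.Eventually.of_forall fun z hz => ?_)
      refine ContinuousOn.rpow_const (ContinuousOn.norm ?_) fun xy hxy => Or.inr hq0
      refine hpdZcont.comp
        (continuous_fst.prodMk (continuous_snd.prodMk continuous_const)).continuousOn ?_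
      intro xy hxy
      exact (hmem _).mpr ⟨hxy.1, hxy.2, hz⟩
  -- integrability on Omega3
  have hint1 : IntegrableOn (fun p => ‖tildeDev h v p‖ ^ q) (Omega3 h) := by
    refine integrableOn_of_contOn_bdd hΩm hμΩ
      (htdcont.norm.rpow_const fun p hp => Or.inr hq0) (M := (h * C) ^ q) ?_
    intro p hp
    rw [Real.norm_of_nonneg (Real.rpow_nonneg (norm_nonneg _) q)]
    exact Real.rpow_le_rpow (norm_nonneg _) (htdb p hp) hq0
  have hΨcont : ContinuousOn (fun p : Pt => h ^ (q-1) * g (p.1, p.2.1)) (Omega3 h) := by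
    refine continuousOn_const.mul ?_
    refine hgcont.comp
      (continuous_fst.prodMk (continuous_fst.comp continuous_snd)).continuousOn ?_
    intro p hp
    obtain ⟨hx, hy, _⟩ := (hmem p).mp hp
    exact ⟨hx, hy⟩
  have hΨb : ∀ p ∈ Omega3 h, ‖h ^ (q-1) * g (p.1, p.2.1)‖ ≤ h ^ (q-1) * (h * C ^ q) := by
    intro p hp
    obtain ⟨hx, hy, _⟩ := (hmem p).mp hp
    rw [Real.norm_eq_abs, abs_mul, abs_of_nonneg (Real.rpow_nonneg hh.le _),
      abs_of_nonneg (hg0 _)]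
    exact mul_le_mul_of_nonneg_left (hgb p.1 hx p.2.1 hy) (Real.rpow_nonneg hh.le _)
  have hint2 : IntegrableOn (fun p : Pt => h ^ (q-1) * g (p.1, p.2.1)) (Omega3 h) :=
    integrableOn_of_contOn_bdd hΩm hμΩ hΨcont hΨb
  have hint3 : IntegrableOn (fun p => ‖pdZ v p‖ ^ q) (Omega3 h) := by
    refine integrableOn_of_contOn_bdd hΩm hμΩ
      (hpdZcont.norm.rpow_const fun p hp => Or.inr hq0) (M := C ^ q) ?_
    intro p hp
    rw [Real.norm_of_nonneg (Real.rpow_nonneg (norm_nonneg _) q)]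
    exact Real.rpow_le_rpow (norm_nonneg _) (hpdZb p hp) hq0
  have hLmono : LqPow h q (tildeDev h v) ≤ ∫ p in Omega3 h, h ^ (q-1) * g (p.1, p.2.1) := by
    rw [LqPow]
    exact setIntegral_mono_on hint1 hint2 hΩm keyPt
  -- Fubini
  have fub : ∀ f : Pt → ℝ, IntegrableOn f (Omega3 h) →
      (∀ x ∈ Ioo (0:ℝ) 1,
        IntegrableOn (fun yz : ℝ × ℝ => f (x, yz)) (Ioo (0:ℝ) 1 ×ˢ Ioo (-h) 0)) →
      ∫ p in Omega3 h, f p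
        = ∫ x in Ioo (0:ℝ) 1, ∫ y in Ioo (0:ℝ) 1, ∫ z in Ioo (-h) 0, f (x, y, z) := by
    intro f hf hsl
    have hf' : IntegrableOn f (Ioo (0:ℝ) 1 ×ˢ (Ioo (0:ℝ) 1 ×ˢ Ioo (-h) 0))
        ((volume : Measure ℝ).prod (volume : Measure (ℝ × ℝ))) := by
      rw [← hvol3]; exact hf
    calc ∫ p in Omega3 h, f p
        = ∫ p in Ioo (0:ℝ) 1 ×ˢ (Ioo (0:ℝ) 1 ×ˢ Ioo (-h) 0), f p
            ∂((volume : Measure ℝ).prod (volume : Measure (ℝ × ℝ))) := by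
          rw [hΩeq, hvol3]
      _ = ∫ x in Ioo (0:ℝ) 1, ∫ yz in Ioo (0:ℝ) 1 ×ˢ Ioo (-h) 0, f (x, yz) :=
          setIntegral_prod f hf'
      _ = ∫ x in Ioo (0:ℝ) 1, ∫ y in Ioo (0:ℝ) 1, ∫ z in Ioo (-h) 0, f (x, y, z) := by
          refine setIntegral_congr_fun measurableSet_Ioo fun x hx => ?_
          have hsl' : IntegrableOn (fun yz : ℝ × ℝ => f (x, yz)) (Ioo (0:ℝ) 1 ×ˢ Ioo (-h) 0)
              ((volume : Measure ℝ).prod (volume : Measure ℝ)) := by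
            rw [← hvol2]; exact hsl x hx
          rw [hvol2]
          exact setIntegral_prod _ hsl'
  -- slice integrability
  have hslice3 : ∀ x ∈ Ioo (0:ℝ) 1,
      IntegrableOn (fun yz : ℝ × ℝ => ‖pdZ v (x, yz)‖ ^ q) (Ioo (0:ℝ) 1 ×ˢ Ioo (-h) 0) := by
    intro x hx
    refine integrableOn_of_contOn_bdd hΩm2 hμIJ ?_ (M := C ^ q) ?_
    · refine ContinuousOn.rpow_const (ContinuousOn.norm ?_) fun yz hyz => Or.inr hq0
      refine hpdZcont.comp (continuous_const.prodMk continuous_id).continuousOn ?_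
      intro yz hyz
      exact (hmem _).mpr ⟨hx, hyz.1, hyz.2⟩
    · intro yz hyz
      rw [Real.norm_of_nonneg (Real.rpow_nonneg (norm_nonneg _) q)]
      exact Real.rpow_le_rpow (norm_nonneg _)
        (hpdZb _ ((hmem _).mpr ⟨hx, hyz.1, hyz.2⟩)) hq0
  have hslice4 : ∀ x ∈ Ioo (0:ℝ) 1,
      IntegrableOn (fun yz : ℝ × ℝ => h ^ (q-1) * g (x, yz.1))
        (Ioo (0:ℝ) 1 ×ˢ Ioo (-h) 0) := by
    intro x hx
    refine integrableOn_of_contOn_bdd hΩm2 hμIJ ?_ (M := h ^ (q-1) * (h * C ^ q)) ?_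
    · refine continuousOn_const.mul ?_
      refine hgcont.comp
        (continuous_const.prodMk continuous_fst).continuousOn ?_
      intro yz hyz
      exact ⟨hx, hyz.1⟩
    · intro yz hyz
      rw [Real.norm_eq_abs, abs_mul, abs_of_nonneg (Real.rpow_nonneg hh.le _),
        abs_of_nonneg (hg0 _)]
      exact mul_le_mul_of_nonneg_left (hgb x hx yz.1 hyz.1) (Real.rpow_nonneg hh.le _)
  -- computing both sides via Fubini
  have hR : LqPow h q (pdZ v)
      = ∫ x in Ioo (0:ℝ) 1, ∫ y in Ioo (0:ℝ) 1, g (x, y) := by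
    rw [LqPow, fub _ hint3 hslice3]
  have hq' : h * h ^ (q-1) = h ^ q := by
    rw [show q = 1 + (q-1) by ring, Real.rpow_add hh, Real.rpow_one]
    ring_nf
  have hΨeq : ∫ p in Omega3 h, h ^ (q-1) * g (p.1, p.2.1) = h ^ q * LqPow h q (pdZ v) := by
    rw [fub _ hint2 hslice4, hR]
    calc ∫ x in Ioo (0:ℝ) 1, ∫ y in Ioo (0:ℝ) 1, ∫ _z in Ioo (-h) 0, h ^ (q-1) * g (x, y)
        = ∫ x in Ioo (0:ℝ) 1, ∫ y in Ioo (0:ℝ) 1, h ^ q * g (x, y) := by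
          refine setIntegral_congr_fun measurableSet_Ioo fun x hx => ?_
          refine setIntegral_congr_fun measurableSet_Ioo fun y hy => ?_
          rw [setIntegral_const, measureReal_def, hvolJ, smul_eq_mul, ← mul_assoc, hq']
      _ = h ^ q * ∫ x in Ioo (0:ℝ) 1, ∫ y in Ioo (0:ℝ) 1, g (x, y) := by
          rw [← integral_const_mul]
          refine setIntegral_congr_fun measurableSet_Ioo fun x hx => ?_
          rw [← integral_const_mul]
  have hfinal : LqPow h q (tildeDev h v) ≤ h ^ q * LqPow h q (pdZ v) :=
    hLmono.trans (le_of_eq hΨeq)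
  have hLq0 : 0 ≤ LqPow h q (tildeDev h v) :=
    setIntegral_nonneg hΩm fun p _ => Real.rpow_nonneg (norm_nonneg _) _
  have hR0 : 0 ≤ LqPow h q (pdZ v) :=
    setIntegral_nonneg hΩm fun p _ => Real.rpow_nonneg (norm_nonneg _) _
  rw [LqNorm, LqNorm]
  calc (LqPow h q (tildeDev h v)) ^ (1/q) ≤ (h ^ q * LqPow h q (pdZ v)) ^ (1/q) :=
        Real.rpow_le_rpow hLq0 hfinal (by positivity)
  _ = h * (LqPow h q (pdZ v)) ^ (1/q) := by
        rw [Real.mul_rpow (Real.rpow_nonneg hh.le q) hR0, ← Real.rpow_mul hh.le,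
          mul_one_div_cancel hqne, Real.rpow_one]
end
end
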